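/- Fix ℓ ∈ ℕ₀ and θ ∈ ℝ, and let C₂(ℓ,θ) be the (2ℓ+1)×(2ℓ+1) tridiagonal matrix with diagonal entries sin(θ)·(ℓ−(j−1)) for j = 1,…,2ℓ+1, superdiagonal entries cos(θ)·k/2 and subdiagonal entries cos(θ)·(2ℓ+1−k)/2 for k = 1,…,2ℓ. Then the multiset of eigenvalues of C₂(ℓ,θ) is {0, ±1, ±2, …, ±ℓ}, independent of θ. -/

import Mathlib

open Matrix

/-- The tridiagonal matrix `C₂(ℓ,θ)` (viewed over `ℂ`): diagonal entries
`sin θ · (ℓ-(j-1))`, superdiagonal `cos θ · k/2`, subdiagonal `cos θ · (2ℓ+1-k)/2`. -/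
noncomputable def C2 (ℓ : ℕ) (θ : ℝ) : Matrix (Fin (2 * ℓ + 1)) (Fin (2 * ℓ + 1)) ℂ :=
  Matrix.of fun i j =>
    if i = j then (Real.sin θ * ((ℓ : ℝ) - (i : ℕ)) : ℝ)
    else if (j : ℕ) = (i : ℕ) + 1 then (Real.cos θ * (((i : ℕ) + 1) / 2) : ℝ)
    else if (i : ℕ) = (j : ℕ) + 1 then (Real.cos θ * ((2 * (ℓ : ℝ) - (j : ℕ)) / 2) : ℝ)
    else 0

section Aux
open Polynomial

/-- If `v ≠ 0` is an eigenvector of `M` with eigenvalue `μ`, then `μ` is a root of charpoly. -/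
lemma aux_root_of_eigen {n : ℕ} (M : Matrix (Fin n) (Fin n) ℂ) (μ : ℂ) (v : Fin n → ℂ)
    (hv : v ≠ 0) (h : M.mulVec v = μ • v) : M.charpoly.IsRoot μ := by
  have heval : M.charpoly.eval μ = (Matrix.diagonal (fun _ : Fin n => μ) - M).det := by
    rw [Matrix.charpoly, ← Polynomial.coe_evalRingHom, RingHom.map_det]
    congr 1
    ext i j
    by_cases hij : i = j
    · subst hij
      simp [Matrix.charmatrix_apply_eq, Matrix.diagonal_apply_eq]
    · simp [Matrix.charmatrix_apply_ne _ _ _ hij, Matrix.diagonal_apply_ne _ hij]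
  have hdet : (Matrix.diagonal (fun _ : Fin n => μ) - M).det = 0 := by
    rw [← Matrix.exists_mulVec_eq_zero_iff]
    refine ⟨v, hv, ?_⟩
    rw [Matrix.sub_mulVec, h]
    funext i
    simp [Matrix.mulVec_diagonal]
  rw [Polynomial.IsRoot, heval, hdet]

/-- If an injective family of `n` values are all roots of the charpoly of an `n × n`
complex matrix, they are exactly the roots. -/
lemma aux_roots_eq {n : ℕ} (M : Matrix (Fin n) (Fin n) ℂ) (f : Fin n → ℂ)
    (hf : Function.Injective f) (h : ∀ k, M.charpoly.IsRoot (f k)) :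
    M.charpoly.roots = Multiset.map f Finset.univ.val := by
  have hmonic : M.charpoly.Monic := M.charpoly_monic
  have hne : M.charpoly ≠ 0 := hmonic.ne_zero
  have hcard : Multiset.card M.charpoly.roots = n := by
    have := (Polynomial.splits_iff_card_roots.mp (IsAlgClosed.splits M.charpoly))
    rw [this, Matrix.charpoly_natDegree_eq_dim, Fintype.card_fin]
  have hnodup : (Multiset.map f Finset.univ.val).Nodup :=
    Multiset.Nodup.map hf Finset.univ.nodup
  have hle : Multiset.map f Finset.univ.val ≤ M.charpoly.roots := by
    rw [Multiset.le_iff_count]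
    intro a
    by_cases ha : a ∈ Multiset.map f Finset.univ.val
    · have h1 : Multiset.count a (Multiset.map f Finset.univ.val) = 1 :=
        Multiset.count_eq_one_of_mem hnodup ha
      rw [h1]
      rw [Multiset.one_le_count_iff_mem, Polynomial.mem_roots hne]
      obtain ⟨k, _, hk⟩ := Multiset.mem_map.mp ha
      exact hk ▸ h k
    · rw [Multiset.count_eq_zero_of_notMem ha]
      exact Nat.zero_le _
  refine (Multiset.eq_of_le_of_card_le hle ?_).symm
  rw [hcard]
  simp

/-- Row sum of a tridiagonal matrix against a vector given by coefficients. -/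
lemma aux_tri_sum (n : ℕ) (d su sb c : ℕ → ℂ) (i : ℕ) (hi : i < n)
    (hc : ∀ j, n ≤ j → c j = 0) :
    (∑ j ∈ Finset.range n,
      (if i = j then d j else if j = i + 1 then su j else if i = j + 1 then sb j else 0) * c j)
    = d i * c i + su (i+1) * c (i+1) + (if i = 0 then 0 else sb (i-1) * c (i-1)) := by
  have hsplit : ∀ j ∈ Finset.range n,
      (if i = j then d j else if j = i + 1 then su j else if i = j + 1 then sb j else 0) * c j
      = (if j = i then d i * c i else 0) + (if j = i + 1 then su (i+1) * c (i+1) else 0)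
        + (if j = i - 1 ∧ i ≠ 0 then sb (i-1) * c (i-1) else 0) := by
    intro j _
    by_cases h1 : i = j
    · subst h1
      rw [if_pos rfl, if_pos rfl, if_neg (by omega), if_neg (by omega : ¬(i = i - 1 ∧ i ≠ 0))]
      ring
    · by_cases h2 : j = i + 1
      · subst h2
        rw [if_neg h1, if_pos rfl, if_neg (by omega), if_pos rfl,
          if_neg (by omega : ¬(i + 1 = i - 1 ∧ i ≠ 0))]
        ring
      · by_cases h3 : i = j + 1
        · have hj : j = i - 1 := by omega
          subst hj
          rw [if_neg h1, if_neg h2, if_pos h3, if_neg (by omega), if_neg h2,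
            if_pos (by omega : i - 1 = i - 1 ∧ i ≠ 0)]
          ring
        · rw [if_neg h1, if_neg h2, if_neg h3, if_neg (by omega), if_neg h2,
            if_neg (by omega : ¬(j = i - 1 ∧ i ≠ 0))]
          ring
  rw [Finset.sum_congr rfl hsplit, Finset.sum_add_distrib, Finset.sum_add_distrib,
    Finset.sum_ite_eq' (Finset.range n) i fun _ => d i * c i,
    Finset.sum_ite_eq' (Finset.range n) (i+1) fun _ => su (i+1) * c (i+1),
    if_pos (Finset.mem_range.mpr hi)]
  have hsu : (if i+1 ∈ Finset.range n then su (i+1) * c (i+1) else 0) = su (i+1) * c (i+1) := by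
    by_cases h1 : i + 1 ∈ Finset.range n
    · rw [if_pos h1]
    · rw [if_neg h1, hc (i+1) (by simpa using h1), mul_zero]
  rw [hsu]
  by_cases hi0 : i = 0
  · subst hi0
    have hz : ∀ j ∈ Finset.range n, (if j = 0 - 1 ∧ (0:ℕ) ≠ 0 then sb (0-1) * c (0-1) else 0) = 0 := by
      intro j _
      rw [if_neg (by omega)]
    rw [Finset.sum_congr rfl hz, Finset.sum_const_zero, if_pos rfl]
  · have hrw : ∀ j ∈ Finset.range n, (if j = i - 1 ∧ i ≠ 0 then sb (i-1) * c (i-1) else 0)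
        = (if j = i - 1 then sb (i-1) * c (i-1) else 0) := by
      intro j _
      by_cases h : j = i - 1
      · rw [if_pos ⟨h, hi0⟩, if_pos h]
      · rw [if_neg (by tauto), if_neg h]
    rw [Finset.sum_congr rfl hrw,
      Finset.sum_ite_eq' (Finset.range n) (i-1) fun _ => sb (i-1) * c (i-1),
      if_pos (Finset.mem_range.mpr (by omega)), if_neg hi0]

lemma aux_pow_lemma (z : ℂ) (t : ℕ) :
    (X - C z) * (C (t:ℂ) * (X - C z)^(t-1)) = C (t:ℂ) * (X - C z)^t := by
  cases t with
  | zero => simp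
  | succ t => rw [Nat.add_sub_cancel, pow_succ]; ring

/-- The key polynomial identity (rearranged form, ready for coefficient extraction). -/
lemma aux_key (ℓ k : ℕ) (hk : k ≤ 2*ℓ) (s co : ℂ) (hco : co ≠ 0) (hsc : s^2 + co^2 = 1) :
    C (co/2) * derivative ((X - C ((1-s)/co))^k * (X - C ((-1-s)/co))^(2*ℓ-k))
      + C (s*(ℓ:ℂ)) * ((X - C ((1-s)/co))^k * (X - C ((-1-s)/co))^(2*ℓ-k))
      + C (co*(ℓ:ℂ)) * (X * ((X - C ((1-s)/co))^k * (X - C ((-1-s)/co))^(2*ℓ-k)))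
    = C ((ℓ:ℂ) - k) * ((X - C ((1-s)/co))^k * (X - C ((-1-s)/co))^(2*ℓ-k))
      + C (co/2) * (X * (X * derivative ((X - C ((1-s)/co))^k * (X - C ((-1-s)/co))^(2*ℓ-k))))
      + C s * (X * derivative ((X - C ((1-s)/co))^k * (X - C ((-1-s)/co))^(2*ℓ-k))) := by
  have ha : co * ((1-s)/co) = 1 - s := by field_simp
  have hb : co * ((-1-s)/co) = -1 - s := by field_simp
  set a : ℂ := (1-s)/co with ha_def
  set b : ℂ := (-1-s)/co with hb_def
  set m : ℕ := 2*ℓ - k with hm_def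
  have hm : (m:ℂ) = 2*(ℓ:ℂ) - k := by
    rw [hm_def, Nat.cast_sub hk]
    push_cast
    ring
  set u : ℂ[X] := X - C a with hu_def
  set w : ℂ[X] := X - C b with hw_def
  -- derivative computation
  have hdp : derivative (u^k * w^m)
      = C (k:ℂ) * u^(k-1) * w^m + C (m:ℂ) * (u^k * w^(m-1)) := by
    rw [derivative_mul, derivative_pow, derivative_pow, hu_def, hw_def]
    simp only [derivative_sub, derivative_X, derivative_C, sub_zero, mul_one]
    ring
  have hu_pow : u * (C (k:ℂ) * u^(k-1)) = C (k:ℂ) * u^k := aux_pow_lemma a k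
  have hw_pow : w * (C (m:ℂ) * w^(m-1)) = C (m:ℂ) * w^m := aux_pow_lemma b m
  -- the quadratic factorisation
  have hq : C (co/2) * 1 - C (co/2) * X^2 - C s * X = -(C (co/2) * (u * w)) := by
    have e1 : C (co/2) * (C a + C b) = - C s := by
      rw [← _root_.map_add, ← _root_.map_mul, ← _root_.map_neg]
      congr 1
      rw [ha_def, hb_def]
      field_simp
      ring
    have e2 : C (co/2) * (C a * C b) = - C (co/2) := by
      rw [← _root_.map_mul, ← _root_.map_mul, ← _root_.map_neg]
      congr 1
      have hab : a * b = -1 := by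
        rw [ha_def, hb_def]
        field_simp
        linear_combination hsc
      rw [hab]; ring
    rw [hu_def, hw_def]
    linear_combination -(X : ℂ[X]) * e1 + e2
  -- scalar-polynomial identity for the multiplier
  have e3 : C (co*(ℓ:ℂ)) = C (co/2) * (C (k:ℂ) + C (m:ℂ)) := by
    rw [← _root_.map_add, ← _root_.map_mul]
    congr 1
    rw [hm]
    ring
  have e4 : C (s*(ℓ:ℂ)) + C (co/2) * (C (k:ℂ) * C b + C (m:ℂ) * C a) = C ((ℓ:ℂ) - k) := by
    rw [← _root_.map_mul, ← _root_.map_mul, ← _root_.map_add, ← _root_.map_mul, ← _root_.map_add]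
    congr 1
    rw [hm, ha_def, hb_def]
    field_simp
    ring
  have E : C (s*(ℓ:ℂ)) + C (co*(ℓ:ℂ)) * X - C (co/2) * (C (k:ℂ) * w + C (m:ℂ) * u)
      = C ((ℓ:ℂ) - k) := by
    rw [hu_def, hw_def]
    linear_combination (X:ℂ[X]) * e3 + e4
  linear_combination (derivative (u^k*w^m)) * hq + (-(C (co/2) * (u*w))) * hdp
    + (-(C (co/2)) * w * w^m) * hu_pow + (-(C (co/2)) * u * u^k) * hw_pow + (u^k*w^m) * E

lemma aux_coeff_identity (ℓ k : ℕ) (hk : k ≤ 2*ℓ) (s co : ℂ) (hco : co ≠ 0)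
    (hsc : s^2 + co^2 = 1) (p : ℂ[X])
    (hp : p = (X - C ((1-s)/co))^k * (X - C ((-1-s)/co))^(2*ℓ-k)) (i : ℕ) :
    s * ((ℓ:ℂ) - i) * p.coeff i + co * (((i:ℂ)+1)/2) * p.coeff (i+1)
      + (if i = 0 then 0 else co * ((2*(ℓ:ℂ) - ((i - 1 : ℕ):ℂ))/2) * p.coeff (i-1))
    = ((ℓ:ℂ) - k) * p.coeff i := by
  have hK := aux_key ℓ k hk s co hco hsc
  rw [← hp] at hK
  have hKi := congrArg (fun q => Polynomial.coeff q i) hK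
  simp only [coeff_add, coeff_C_mul] at hKi
  match i with
  | 0 =>
    rw [if_pos rfl]
    simp only [Polynomial.mul_coeff_zero, Polynomial.coeff_X_zero, zero_mul, mul_zero,
      coeff_derivative, add_zero] at hKi
    push_cast
    linear_combination hKi
  | (j+1) =>
    rw [if_neg (Nat.succ_ne_zero j)]
    simp only [Nat.add_sub_cancel]
    simp only [Polynomial.coeff_X_mul, coeff_derivative] at hKi
    cases j with
    | zero =>
      simp only [Polynomial.mul_coeff_zero, Polynomial.coeff_X_zero, zero_mul, mul_zero,
        add_zero] at hKi
      push_cast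
      push_cast at hKi
      linear_combination hKi
    | succ t =>
      simp only [Polynomial.coeff_X_mul, coeff_derivative] at hKi
      push_cast
      push_cast at hKi
      linear_combination hKi

/-- Eigenvector for `cos θ ≠ 0`. -/
lemma aux_eigen_nonzero (ℓ : ℕ) (θ : ℝ) (hcos : Real.cos θ ≠ 0) (k : Fin (2*ℓ+1)) :
    ∃ v : Fin (2*ℓ+1) → ℂ, v ≠ 0 ∧ (C2 ℓ θ).mulVec v = ((ℓ:ℂ) - (k:ℕ)) • v := by
  have hco' : (Real.cos θ : ℂ) ≠ 0 := Complex.ofReal_ne_zero.mpr hcos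
  have hsc : (Real.sin θ : ℂ)^2 + (Real.cos θ : ℂ)^2 = 1 := by
    exact_mod_cast Real.sin_sq_add_cos_sq θ
  have hk : (k:ℕ) ≤ 2*ℓ := by omega
  set p : ℂ[X] := (X - C ((1-(Real.sin θ : ℂ))/(Real.cos θ : ℂ)))^(k:ℕ)
    * (X - C ((-1-(Real.sin θ : ℂ))/(Real.cos θ : ℂ)))^(2*ℓ-(k:ℕ)) with hp_def
  have hmonic : p.Monic := ((monic_X_sub_C _).pow _).mul ((monic_X_sub_C _).pow _)
  have hdeg : p.natDegree = 2*ℓ := by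
    rw [hp_def, Polynomial.Monic.natDegree_mul ((monic_X_sub_C _).pow _)
      ((monic_X_sub_C _).pow _)]
    simp only [natDegree_pow, natDegree_X_sub_C, mul_one]
    omega
  refine ⟨fun j => p.coeff j, ?_, ?_⟩
  · intro h0
    have h1 := congrFun h0 ⟨2*ℓ, by omega⟩
    have h2 : p.coeff (2*ℓ) = 1 := by
      rw [← hdeg]
      exact hmonic.coeff_natDegree
    rw [h2] at h1
    exact one_ne_zero h1
  · funext i
    have hentry : ∀ j : Fin (2*ℓ+1), (C2 ℓ θ).mulVec (fun j => p.coeff j) i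
        = ∑ j : Fin (2*ℓ+1), C2 ℓ θ i j * p.coeff (j:ℕ) := fun _ => rfl
    rw [hentry i]
    have hfun : ∀ j : Fin (2*ℓ+1), C2 ℓ θ i j * p.coeff (j:ℕ)
        = (fun t : ℕ => (if (i:ℕ) = t then (Real.sin θ : ℂ) * ((ℓ:ℂ) - t)
            else if t = (i:ℕ) + 1 then (Real.cos θ : ℂ) * ((t:ℂ)/2)
            else if (i:ℕ) = t + 1 then (Real.cos θ : ℂ) * ((2*(ℓ:ℂ) - (t:ℂ))/2)
            else 0) * p.coeff t) (j:ℕ) := by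
      intro j
      simp only [C2, Matrix.of_apply, Fin.ext_iff]
      congr 1
      split_ifs with h1 h2 h3
      · push_cast [h1]; ring
      · push_cast [h2]; ring
      · push_cast; ring
      · rfl
    rw [Finset.sum_congr rfl (fun j _ => hfun j),
      Fin.sum_univ_eq_sum_range (fun t : ℕ => (if (i:ℕ) = t then (Real.sin θ : ℂ) * ((ℓ:ℂ) - t)
            else if t = (i:ℕ) + 1 then (Real.cos θ : ℂ) * ((t:ℂ)/2)
            else if (i:ℕ) = t + 1 then (Real.cos θ : ℂ) * ((2*(ℓ:ℂ) - (t:ℂ))/2)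
            else 0) * p.coeff t) (2*ℓ+1),
      aux_tri_sum (2*ℓ+1) _ _ _ _ (i:ℕ) i.isLt
        (fun j hj => Polynomial.coeff_eq_zero_of_natDegree_lt (by omega))]
    have key := aux_coeff_identity ℓ (k:ℕ) hk (Real.sin θ : ℂ) (Real.cos θ : ℂ) hco' hsc p hp_def (i:ℕ)
    simp only [Pi.smul_apply, smul_eq_mul]
    rw [← key]
    by_cases h0 : (i:ℕ) = 0
    · rw [if_pos h0]
      push_cast
      ring
    · rw [if_neg h0]
      push_cast
      ring

/-- Eigenvector for `cos θ = 0`. -/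
lemma aux_eigen_zero (ℓ : ℕ) (θ : ℝ) (hcos : Real.cos θ = 0) (k : Fin (2*ℓ+1)) :
    ∃ v : Fin (2*ℓ+1) → ℂ, v ≠ 0 ∧ (C2 ℓ θ).mulVec v = ((ℓ:ℂ) - (k:ℕ)) • v := by
  have hsin : Real.sin θ = 1 ∨ Real.sin θ = -1 := by
    have h1 := Real.sin_sq_add_cos_sq θ
    rw [hcos] at h1
    have h2 : (Real.sin θ - 1) * (Real.sin θ + 1) = 0 := by nlinarith
    rcases mul_eq_zero.mp h2 with h | h
    · left; linarith
    · right; linarith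
  have hoff : ∀ i j : Fin (2*ℓ+1), i ≠ j → C2 ℓ θ i j = 0 := by
    intro i j hne
    simp only [C2, Matrix.of_apply]
    rw [if_neg hne]
    split_ifs <;> simp [hcos]
  rcases hsin with hsin | hsin
  · refine ⟨Pi.single k 1, ?_, ?_⟩
    · intro h0
      have := congrFun h0 k
      simp at this
    · rw [Matrix.mulVec_single_one]
      funext i
      rw [Matrix.col_apply]
      by_cases hik : i = k
      · subst hik
        simp only [C2, Matrix.of_apply, if_pos rfl, Pi.smul_apply, Pi.single_eq_same,
          smul_eq_mul, mul_one, hsin]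
        push_cast
        ring
      · rw [hoff i k hik]
        simp [Pi.single_eq_of_ne hik]
  · refine ⟨Pi.single k.rev 1, ?_, ?_⟩
    · intro h0
      have := congrFun h0 k.rev
      simp at this
    · rw [Matrix.mulVec_single_one]
      funext i
      rw [Matrix.col_apply]
      by_cases hik : i = k.rev
      · subst hik
        simp only [C2, Matrix.of_apply, if_pos rfl, Pi.smul_apply, Pi.single_eq_same,
          smul_eq_mul, mul_one, hsin]
        have hval : ((k.rev : ℕ) : ℝ) = 2*ℓ - (k:ℕ) := by
          rw [Fin.val_rev, show 2*ℓ + 1 - ((k:ℕ)+1) = 2*ℓ - (k:ℕ) by omega,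
            Nat.cast_sub (by omega : (k:ℕ) ≤ 2*ℓ)]
          push_cast
          ring
        rw [hval]
        have : (((2:ℝ)*ℓ - (k:ℕ) : ℝ) : ℂ) = 2*(ℓ:ℂ) - ((k:ℕ):ℂ) := by push_cast; ring
        push_cast
        ring
      · rw [hoff i k.rev hik]
        simp [Pi.single_eq_of_ne hik]

end Aux

/-- The multiset of eigenvalues of `C₂(ℓ,θ)` is `{0, ±1, …, ±ℓ}`, independently of `θ`. -/
theorem stmt15 (ℓ : ℕ) (θ : ℝ) :
    (C2 ℓ θ).charpoly.roots =
      Multiset.map (fun j : Fin (2 * ℓ + 1) => ((ℓ : ℂ) - (j : ℕ)))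
        Finset.univ.val := by
  apply aux_roots_eq
  · intro j1 j2 h
    have h2 : ((j1:ℕ):ℂ) = ((j2:ℕ):ℂ) := by
      dsimp only at h
      linear_combination -h
    exact Fin.ext (Nat.cast_injective h2)
  · intro k
    by_cases hcos : Real.cos θ = 0
    · obtain ⟨v, hv, he⟩ := aux_eigen_zero ℓ θ hcos k
      exact aux_root_of_eigen _ _ v hv he
    · obtain ⟨v, hv, he⟩ := aux_eigen_nonzero ℓ θ hcos k
      exact aux_root_of_eigen _ _ v hv he
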